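/- Let A be a Conway semiring satisfying 1*·1* = 1*, 1*·a = a·1* for all a, and 1*·(1*a)* = 1*·a* for all a. Then the set 1*A = {1*·a : a ∈ A} is closed under addition, multiplication, and the 'plus' operation x ↦ x·x*; moreover (1*a)·(1*a)* = 1*·(a·a*) for all a ∈ A. -/
import Mathlib


/-- For a Conway semiring `A` satisfying `1*·1* = 1*`, `1*·a = a·1*` and
`1*·(1*a)* = 1*·a*`, the set `1*A = {1*·a : a ∈ A}` is closed under addition,
multiplication, and the plus operation `x ↦ x·x*`; moreover
`(1*a)·(1*a)* = 1*·(a·a*)` for all `a ∈ A`. -/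
theorem stmt_12 {S : Type*} [Semiring S] (star : S → S)
    (hsum : ∀ a b : S, star (a + b) = star a * star (b * star a))
    (hprod : ∀ a b : S, star (a * b) = 1 + a * star (b * a) * b)
    (ax1 : star 1 * star 1 = star 1)
    (ax2 : ∀ a : S, star 1 * a = a * star 1)
    (ax3 : ∀ a : S, star 1 * star (star 1 * a) = star 1 * star a) :
    (∀ x ∈ Set.range (fun a : S => star 1 * a), ∀ y ∈ Set.range (fun a : S => star 1 * a),
        x + y ∈ Set.range (fun a : S => star 1 * a)) ∧
    (∀ x ∈ Set.range (fun a : S => star 1 * a), ∀ y ∈ Set.range (fun a : S => star 1 * a),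
        x * y ∈ Set.range (fun a : S => star 1 * a)) ∧
    (∀ x ∈ Set.range (fun a : S => star 1 * a),
        x * star x ∈ Set.range (fun a : S => star 1 * a)) ∧
    (∀ a : S, (star 1 * a) * star (star 1 * a) = star 1 * (a * star a)) := by
  have key : ∀ a : S, (star 1 * a) * star (star 1 * a) = star 1 * (a * star a) := by
    intro a
    calc (star 1 * a) * star (star 1 * a)
        = a * (star 1 * star (star 1 * a)) := by nth_rewrite 1 [ax2 a]; rw [mul_assoc]
      _ = a * (star 1 * star a) := by rw [ax3]
      _ = star 1 * (a * star a) := by rw [ax2 (a * star a), ax2 (star a), ← mul_assoc]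
  refine ⟨?_, ?_, ?_, key⟩
  · rintro x ⟨a, rfl⟩ y ⟨b, rfl⟩
    exact ⟨a + b, by simp [mul_add]⟩
  · rintro x ⟨a, rfl⟩ y ⟨b, rfl⟩
    exact ⟨a * star 1 * b, by simp [mul_assoc]⟩
  · rintro x ⟨a, rfl⟩
    exact ⟨a * star a, (key a).symm⟩
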